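/- Let G be a finite simple graph on at least 4 vertices with minimum degree δ such that for every set W of at most 2 vertices, the induced subgraph of G on V(G) ∖ W is connected. Then for every integer k with 1 ≤ k ≤ δ − 2, the adversary wins on G with k ignorant agents; consequently Broadcast is not solvable on G with k ignorant agents whenever 1 ≤ k ≤ δ − 2. -/

import Mathlib

namespace BroadcastPaper

section Game

variable {V A : Type*}

/-- An adversary strategy assigns to each finite sequence of position maps
`(p_0, …, p_t)` a simple graph on `V` (intended: a connected spanning subgraph of `G`). -/
abbrev AdvStrategy (V A : Type*) := ∀ t : ℕ, (Fin (t + 1) → A → V) → SimpleGraph V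

/-- An agent strategy assigns to each finite sequence of position maps `(p_0, …, p_t)`
together with a graph `H` a new position map `p_{t+1}`. -/
abbrev AgentStrategy (V A : Type*) := ∀ t : ℕ, (Fin (t + 1) → A → V) → SimpleGraph V → (A → V)

/-- Validity of an adversary strategy: it always produces a connected spanning
subgraph of `G`. -/
def ValidAdv (G : SimpleGraph V) (σ : AdvStrategy V A) : Prop :=
  ∀ t h, σ t h ≤ G ∧ (σ t h).Connected

/-- Validity of an agent strategy: given any history ending in `p_t` and any connected
spanning subgraph `H` of `G`, each agent either stays put or moves along an edge of `H`. -/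
def ValidAgent (G : SimpleGraph V) (τ : AgentStrategy V A) : Prop :=
  ∀ (t : ℕ) (h : Fin (t + 1) → A → V) (H : SimpleGraph V), H ≤ G → H.Connected →
    ∀ a, τ t h H a = h (Fin.last t) a ∨ H.Adj (h (Fin.last t) a) (τ t h H a)

/-- The history `(p_0, …, p_t)` of the play determined by `σ`, `τ` and `p_0`. -/
def hist (σ : AdvStrategy V A) (τ : AgentStrategy V A) (p0 : A → V) :
    (t : ℕ) → Fin (t + 1) → A → V
  | 0 => fun _ => p0
  | t + 1 =>
      Fin.snoc (hist σ τ p0 t) (τ t (hist σ τ p0 t) (σ t (hist σ τ p0 t)))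

/-- The position map `p_t` of the play determined by `σ`, `τ` and `p_0`. -/
def play (σ : AdvStrategy V A) (τ : AgentStrategy V A) (p0 : A → V) (t : ℕ) : A → V :=
  hist σ τ p0 t (Fin.last t)

/-- The evolving sets `S_t` of source agents: `S_0` initially, and at each step any
agent co-located with a source agent becomes a source agent. -/
def sources (p : ℕ → A → V) (S0 : Set A) : ℕ → Set A
  | 0 => S0
  | t + 1 => sources p S0 t ∪ {a | ∃ b ∈ sources p S0 t, p (t + 1) a = p (t + 1) b}

/-- The play `p` with initial source set `S0` solves Broadcast if at some round every
agent is a source agent. -/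
def Solves (p : ℕ → A → V) (S0 : Set A) : Prop :=
  ∃ T, sources p S0 T = Set.univ

/-- Broadcast is solvable on `G` with `k` ignorant agents: with agents `Fin (k+1)`,
agent `0` being the unique source agent, for every injective initial placement there is
a valid agent strategy beating every valid adversary strategy. -/
def BroadcastSolvable (G : SimpleGraph V) (k : ℕ) : Prop :=
  ∀ p0 : Fin (k + 1) → V, Function.Injective p0 →
    ∃ τ : AgentStrategy V (Fin (k + 1)), ValidAgent G τ ∧
      ∀ σ : AdvStrategy V (Fin (k + 1)), ValidAdv G σ →
        Solves (play σ τ p0) {0}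

/-- The adversary wins on `G` with `k` ignorant agents: there are an injective initial
placement and a valid adversary strategy such that against every valid agent strategy,
no agent outside `S_t` is ever co-located with an agent of `S_t`. -/
def AdversaryWins (G : SimpleGraph V) (k : ℕ) : Prop :=
  ∃ p0 : Fin (k + 1) → V, Function.Injective p0 ∧
    ∃ σ : AdvStrategy V (Fin (k + 1)), ValidAdv G σ ∧
      ∀ τ : AgentStrategy V (Fin (k + 1)), ValidAgent G τ →
        ∀ t, ∀ a ∉ sources (play σ τ p0) {0} t, ∀ b ∈ sources (play σ τ p0) {0} t,
          play σ τ p0 t a ≠ play σ τ p0 t b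

end Game

section Aux

variable {V : Type*}

lemma exists_avoid [Fintype V] (G : SimpleGraph V) [DecidableRel G.Adj] (u : V)
    (S : Finset V) (hS : S.card < G.degree u) : ∃ w, G.Adj u w ∧ w ∉ S := by
  by_contra h
  push_neg at h
  have hsub : G.neighborFinset u ⊆ S := fun w hw =>
    h w (by rwa [SimpleGraph.mem_neighborFinset] at hw)
  have := Finset.card_le_card hsub
  rw [SimpleGraph.card_neighborFinset_eq_degree] at this
  omega

def valHom (G H : SimpleGraph V) (s : Set V)
    (hle : ∀ a b : V, a ∈ s → b ∈ s → G.Adj a b → H.Adj a b) : G.induce s →g H :=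
  ⟨Subtype.val, fun {a b} hab => hle a.1 b.1 a.2 b.2 hab⟩

lemma valHom_apply (G H : SimpleGraph V) (s : Set V) (hle) (a : s) :
    valHom G H s hle a = a.1 := rfl

def HAdj (G : SimpleGraph V) (u w x a b : V) : Prop :=
  (G.Adj a b ∧ a ≠ u ∧ a ≠ w ∧ b ≠ u ∧ b ≠ w) ∨ (a = u ∧ b = w) ∨ (a = w ∧ b = u) ∨
    (a = w ∧ b = x) ∨ (a = x ∧ b = w)

def HGraph (G : SimpleGraph V) (u w x : V) (huw : G.Adj u w) (hwx : G.Adj w x) :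
    SimpleGraph V where
  Adj := HAdj G u w x
  symm := by
    refine ⟨fun a b h => ?_⟩
    unfold HAdj at *
    rcases h with ⟨h1, h2, h3, h4, h5⟩ | h | h | h | h
    · exact Or.inl ⟨h1.symm, h4, h5, h2, h3⟩
    · tauto
    · tauto
    · tauto
    · tauto
  loopless := by
    refine ⟨fun a h => ?_⟩
    rcases h with ⟨h1, _⟩ | ⟨h1, h2⟩ | ⟨h1, h2⟩ | ⟨h1, h2⟩ | ⟨h1, h2⟩
    · exact G.loopless.irrefl a h1
    · exact huw.ne (h1.symm.trans h2)
    · exact huw.ne (h2.symm.trans h1)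
    · exact hwx.ne (h1.symm.trans h2)
    · exact hwx.ne (h2.symm.trans h1)

lemma HGraph_le (G : SimpleGraph V) (u w x : V) (huw : G.Adj u w) (hwx : G.Adj w x) :
    HGraph G u w x huw hwx ≤ G := by
  intro a b h
  rcases h with ⟨h1, _⟩ | ⟨h1, h2⟩ | ⟨h1, h2⟩ | ⟨h1, h2⟩ | ⟨h1, h2⟩
  · exact h1
  · subst h1; subst h2; exact huw
  · subst h1; subst h2; exact huw.symm
  · subst h1; subst h2; exact hwx
  · subst h1; subst h2; exact hwx.symm

lemma HGraph_adj_u (G : SimpleGraph V) (u w x : V) (huw : G.Adj u w) (hwx : G.Adj w x)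
    (hxu : x ≠ u) {b : V} (h : (HGraph G u w x huw hwx).Adj u b) : b = w := by
  rcases h with ⟨_, h2, _⟩ | ⟨_, h2⟩ | ⟨h1, _⟩ | ⟨h1, _⟩ | ⟨h1, _⟩
  · exact absurd rfl h2
  · exact h2
  · exact absurd h1 huw.ne
  · exact absurd h1 huw.ne
  · exact absurd h1.symm hxu

lemma HGraph_adj_far (G : SimpleGraph V) (u w x : V) (huw : G.Adj u w) (hwx : G.Adj w x)
    {v b : V} (hvu : v ≠ u) (hvw : v ≠ w) (hvx : v ≠ x)
    (h : (HGraph G u w x huw hwx).Adj v b) : b ≠ u ∧ b ≠ w := by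
  rcases h with ⟨_, _, _, h4, h5⟩ | ⟨h1, _⟩ | ⟨h1, _⟩ | ⟨h1, _⟩ | ⟨h1, _⟩
  · exact ⟨h4, h5⟩
  · exact absurd h1 hvu
  · exact absurd h1 hvw
  · exact absurd h1 hvw
  · exact absurd h1 hvx

lemma HGraph_connected (G : SimpleGraph V) (u w x : V) (huw : G.Adj u w) (hwx : G.Adj w x)
    (hxu : x ≠ u) (hc : (G.induce (({u, w} : Set V)ᶜ)).Connected) :
    (HGraph G u w x huw hwx).Connected := by
  set H := HGraph G u w x huw hwx with hH
  have hle : ∀ a b : V, a ∈ (({u, w} : Set V)ᶜ) → b ∈ (({u, w} : Set V)ᶜ) →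
      G.Adj a b → H.Adj a b := by
    intro a b ha hb hab
    simp only [Set.mem_compl_iff, Set.mem_insert_iff, Set.mem_singleton_iff, not_or] at ha hb
    exact Or.inl ⟨hab, ha.1, ha.2, hb.1, hb.2⟩
  have hx : x ∈ (({u, w} : Set V)ᶜ) := by
    simp only [Set.mem_compl_iff, Set.mem_insert_iff, Set.mem_singleton_iff, not_or]
    exact ⟨hxu, hwx.ne'⟩
  have hwxH : H.Adj w x := Or.inr (Or.inr (Or.inr (Or.inl ⟨rfl, rfl⟩)))
  have huwH : H.Adj u w := Or.inr (Or.inl ⟨rfl, rfl⟩)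
  have key : ∀ z, H.Reachable z x := by
    intro z
    by_cases hz : z ∈ (({u, w} : Set V)ᶜ)
    · simpa [valHom_apply] using (hc.preconnected ⟨z, hz⟩ ⟨x, hx⟩).map (valHom G H _ hle)
    · simp only [Set.mem_compl_iff, Set.mem_insert_iff, Set.mem_singleton_iff, not_or,
        not_and, not_not] at hz
      by_cases hzu : z = u
      · subst hzu; exact huwH.reachable.trans hwxH.reachable
      · have : z = w := by tauto
        subst this; exact hwxH.reachable
  haveI : Nonempty V := ⟨u⟩
  exact ⟨fun a b => (key a).trans (key b).symm⟩

def Cond (G : SimpleGraph V) (k : ℕ) (p : Fin (k + 1) → V) : Prop :=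
  ∃ w, G.Adj (p 0) w ∧ (∀ a, a ≠ 0 → p a ≠ w) ∧
    ∃ x, G.Adj w x ∧ x ≠ p 0 ∧ ∀ a, a ≠ 0 → p a ≠ x

open Classical in
noncomputable def advGraph (G : SimpleGraph V) (k : ℕ) (p : Fin (k + 1) → V) :
    SimpleGraph V :=
  if h : Cond G k p then
    HGraph G (p 0) h.choose h.choose_spec.2.2.choose h.choose_spec.1
      h.choose_spec.2.2.choose_spec.1
  else G

lemma connected_of_induce_compl_empty (G : SimpleGraph V)
    (h : (G.induce ((∅ : Set V)ᶜ)).Connected) : G.Connected := by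
  obtain ⟨⟨a, _⟩⟩ := h.nonempty
  haveI : Nonempty V := ⟨a⟩
  exact ⟨fun x y => by
    simpa [valHom_apply] using (h.preconnected ⟨x, by simp⟩ ⟨y, by simp⟩).map
      (valHom G G _ (fun a b _ _ hab => hab))⟩

lemma advGraph_valid (G : SimpleGraph V)
    (hconn : ∀ W : Set V, W.ncard ≤ 2 → (G.induce (Wᶜ : Set V)).Connected)
    (k : ℕ) (p : Fin (k + 1) → V) :
    advGraph G k p ≤ G ∧ (advGraph G k p).Connected := by
  unfold advGraph
  split_ifs with h
  · refine ⟨HGraph_le _ _ _ _ _ _, ?_⟩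
    refine HGraph_connected _ _ _ _ _ _ ?_ ?_
    · exact h.choose_spec.2.2.choose_spec.2.1
    · refine hconn _ ?_
      refine le_trans (Set.ncard_insert_le _ _) ?_
      simp
  · exact ⟨le_refl G, connected_of_induce_compl_empty G (hconn ∅ (by simp))⟩

end Aux

/-- let `G` be a finite simple graph on at least 4 vertices with minimum
degree `δ` such that removing any set of at most 2 vertices leaves a connected induced
subgraph. Then for every `k` with `1 ≤ k ≤ δ − 2` the adversary wins on `G` with `k`
ignorant agents; consequently Broadcast is not solvable on `G` with `k` ignorant
agents. -/
theorem three_connected_adversary_wins {V : Type*} [Fintype V] (G : SimpleGraph V)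
    [DecidableRel G.Adj] (hV : 4 ≤ Fintype.card V)
    (hconn : ∀ W : Set V, W.ncard ≤ 2 → (G.induce (Wᶜ : Set V)).Connected)
    (k : ℕ) (hk1 : 1 ≤ k) (hk2 : k ≤ G.minDegree - 2) :
    AdversaryWins G k ∧ ¬ BroadcastSolvable G k := by
  classical
  have hne : Nonempty V := by
    rw [← Fintype.card_pos_iff]; omega
  obtain ⟨v0⟩ := hne
  have hδk : k + 2 ≤ G.minDegree := by omega
  have hcard : k + 1 ≤ Fintype.card V := by
    have h1 := G.minDegree_le_degree v0
    have h2 : G.degree v0 < Fintype.card V := G.degree_lt_card_verts v0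
    omega
  obtain ⟨e⟩ : Nonempty (Fin (k + 1) ↪ V) := by
    apply Function.Embedding.nonempty_of_card_le
    simpa using hcard
  set p0 : Fin (k + 1) → V := (e : Fin (k + 1) → V) with hp0
  set σ : AdvStrategy V (Fin (k + 1)) := fun t h => advGraph G k (h (Fin.last t)) with hσ
  have hσvalid : ValidAdv G σ := fun t h => advGraph_valid G hconn k (h (Fin.last t))
  -- the key invariant: the source agent 0 never shares a vertex with another agent
  have hInv : ∀ τ, ValidAgent G τ → ∀ t, ∀ a, a ≠ 0 →
      play σ τ p0 t a ≠ play σ τ p0 t 0 := by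
    intro τ hτ t
    induction t with
    | zero =>
      intro a ha h
      exact ha (e.injective h)
    | succ t ih =>
      set p : Fin (k + 1) → V := play σ τ p0 t with hp
      have himg : (Finset.image p (Finset.univ.erase 0)).card ≤ k := by
        refine le_trans Finset.card_image_le ?_
        rw [Finset.card_erase_of_mem (Finset.mem_univ _)]
        simp
      have hmemimg : ∀ a : Fin (k + 1), a ≠ 0 →
          p a ∈ Finset.image p (Finset.univ.erase 0) := fun a ha =>
        Finset.mem_image_of_mem p (Finset.mem_erase.2 ⟨ha, Finset.mem_univ _⟩)
      have hcond : Cond G k p := by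
        obtain ⟨w, hw1, hw2⟩ := exists_avoid G (p 0) (Finset.image p (Finset.univ.erase 0))
          (by have := G.minDegree_le_degree (p 0); omega)
        obtain ⟨x, hx1, hx2⟩ := exists_avoid G w
          (insert (p 0) (Finset.image p (Finset.univ.erase 0)))
          (by
            have := G.minDegree_le_degree w
            have := Finset.card_insert_le (p 0) (Finset.image p (Finset.univ.erase 0))
            omega)
        refine ⟨w, hw1, ?_, x, hx1, ?_, ?_⟩
        · intro a ha hpa
          exact hw2 (hpa ▸ hmemimg a ha)
        · intro hxp
          exact hx2 (hxp ▸ Finset.mem_insert_self _ _)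
        · intro a ha hpa
          exact hx2 (Finset.mem_insert_of_mem (hpa ▸ hmemimg a ha))
      set w := hcond.choose with hw
      set x := hcond.choose_spec.2.2.choose with hx
      have huw : G.Adj (p 0) w := hcond.choose_spec.1
      have hwavoid : ∀ a, a ≠ 0 → p a ≠ w := hcond.choose_spec.2.1
      have hwx : G.Adj w x := hcond.choose_spec.2.2.choose_spec.1
      have hxu : x ≠ p 0 := hcond.choose_spec.2.2.choose_spec.2.1
      have hxavoid : ∀ a, a ≠ 0 → p a ≠ x := hcond.choose_spec.2.2.choose_spec.2.2
      have hσt : σ t (hist σ τ p0 t) = advGraph G k p := rfl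
      have hadv : advGraph G k p = HGraph G (p 0) w x huw hwx := dif_pos hcond
      have heq : σ t (hist σ τ p0 t) = HGraph G (p 0) w x huw hwx := hadv
      have hHle := (hσvalid t (hist σ τ p0 t)).1
      have hHconn := (hσvalid t (hist σ τ p0 t)).2
      set q : Fin (k + 1) → V := τ t (hist σ τ p0 t) (σ t (hist σ τ p0 t)) with hq
      have hmove := hτ t (hist σ τ p0 t) (σ t (hist σ τ p0 t)) hHle hHconn
      have hlast : hist σ τ p0 t (Fin.last t) = p := rfl
      rw [← hq, hlast, heq] at hmove
      have hplay : play σ τ p0 (t + 1) = q := by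
        simp only [play, hist]
        rw [Fin.snoc_last]
      intro a ha hcontra
      rw [hplay] at hcontra
      have hq0 : q 0 = p 0 ∨ q 0 = w := by
        rcases hmove 0 with h | h
        · exact Or.inl h
        · exact Or.inr (HGraph_adj_u G (p 0) w x huw hwx hxu h)
      have hqa : q a ≠ p 0 ∧ q a ≠ w := by
        rcases hmove a with h | h
        · rw [h]
          exact ⟨ih a ha, hwavoid a ha⟩
        · exact HGraph_adj_far G (p 0) w x huw hwx (ih a ha) (hwavoid a ha) (hxavoid a ha) h
      rcases hq0 with h | h <;> rw [h] at hcontra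
      · exact hqa.1 hcontra
      · exact hqa.2 hcontra
  -- hence the set of sources is always just {0}
  have hS : ∀ τ, ValidAgent G τ → ∀ t, sources (play σ τ p0) {0} t = {0} := by
    intro τ hτ t
    induction t with
    | zero => rfl
    | succ t ih =>
      show sources (play σ τ p0) {0} t ∪ _ = {0}
      rw [ih]
      ext a
      simp only [Set.mem_union, Set.mem_setOf_eq, Set.mem_singleton_iff]
      constructor
      · rintro (h | ⟨b, hb, hab⟩)
        · exact h
        · obtain rfl : b = 0 := hb
          by_contra ha0
          exact hInv τ hτ (t + 1) a ha0 hab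
      · exact fun h => Or.inl h
  constructor
  · refine ⟨p0, e.injective, σ, hσvalid, ?_⟩
    intro τ hτ t a ha b hb
    rw [hS τ hτ t] at ha hb
    simp only [Set.mem_singleton_iff] at ha hb
    subst hb
    exact hInv τ hτ t a ha
  · intro hB
    obtain ⟨τ, hτ, hwin⟩ := hB p0 e.injective
    obtain ⟨T, hT⟩ := hwin σ hσvalid
    rw [hS τ hτ T] at hT
    have h1 : (⟨1, by omega⟩ : Fin (k + 1)) ∈ ({0} : Set (Fin (k + 1))) := by
      rw [hT]; trivial
    have h2 := Set.mem_singleton_iff.1 h1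
    have h3 := congrArg Fin.val h2
    simp at h3

end BroadcastPaper
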